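/- There is no planar non-collinear four-body central configuration with vanishing total mass, vanishing vector of inertia, and vanishing moment of inertia: there exist no pairwise distinct points r₁, r₂, r₃, r₄ in ℝ², not all on one line, and nonzero real masses m₁, m₂, m₃, m₄ with m₁ + m₂ + m₃ + m₄ = 0, m₁r₁ + m₂r₂ + m₃r₃ + m₄r₄ = 0, and m₁‖r₁‖² + m₂‖r₂‖² + m₃‖r₃‖² + m₄‖r₄‖² = 0, such that the configuration is central with some multiplier ξ. -/

import Mathlib

open Real

/-- The gravitational acceleration of body `i` in a planar `N`-body configuration
with masses `m` and positions `r`. -/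
noncomputable def accel {N : ℕ} (m : Fin N → ℝ) (r : Fin N → EuclideanSpace ℝ (Fin 2))
    (i : Fin N) : EuclideanSpace ℝ (Fin 2) :=
  ∑ j ∈ Finset.univ.erase i, (m j / ‖r j - r i‖ ^ 3) • (r j - r i)

/-- The configuration is central with multiplier `ξ`:
`γ_j - γ_i = ξ • (r_j - r_i)` for all `i`, `j`. -/
def IsCentral {N : ℕ} (m : Fin N → ℝ) (r : Fin N → EuclideanSpace ℝ (Fin 2)) (ξ : ℝ) : Prop :=
  ∀ i j, accel m r j - accel m r i = ξ • (r j - r i)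

section Helpers

lemma norm_sq_two (p : EuclideanSpace ℝ (Fin 2)) : ‖p‖^2 = p 0^2 + p 1^2 := by
  rw [EuclideanSpace.norm_eq, Real.sq_sqrt (by positivity)]
  simp [Fin.sum_univ_two]

lemma smul_apply2 (c : ℝ) (p : EuclideanSpace ℝ (Fin 2)) (k : Fin 2) : (c • p) k = c * p k := rfl
lemma sub_apply2 (p q : EuclideanSpace ℝ (Fin 2)) (k : Fin 2) : (p - q) k = p k - q k := rfl

lemma sum_apply2 {n : ℕ} (f : Fin n → EuclideanSpace ℝ (Fin 2)) (s : Finset (Fin n)) (k : Fin 2) :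
    (∑ i ∈ s, f i) k = ∑ i ∈ s, f i k := by
  induction s using Finset.cons_induction with
  | empty => rfl
  | cons a s ha ih => rw [Finset.sum_cons, Finset.sum_cons, ← ih]; rfl

noncomputable def vec2 (A B : ℝ) : EuclideanSpace ℝ (Fin 2) :=
  (WithLp.equiv 2 (Fin 2 → ℝ)).symm ![A, B]
lemma vec2_apply0 (A B : ℝ) : vec2 A B 0 = A := rfl
lemma vec2_apply1 (A B : ℝ) : vec2 A B 1 = B := rfl

lemma cross_dep (v w : EuclideanSpace ℝ (Fin 2)) (hv : v ≠ 0)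
    (h : v 0 * w 1 - v 1 * w 0 = 0) : ∃ t : ℝ, w = t • v := by
  have hv' : v 0 ≠ 0 ∨ v 1 ≠ 0 := by
    by_contra hc
    push_neg at hc
    exact hv (by ext k; fin_cases k <;> simp [hc.1, hc.2] <;> rfl)
  rcases hv' with h0 | h1
  · exact ⟨w 0 / v 0, by ext k; fin_cases k <;> simp only [Fin.zero_eta, Fin.mk_one] <;> (rw [smul_apply2]; field_simp; try linarith [h])⟩
  · exact ⟨w 1 / v 1, by ext k; fin_cases k <;> simp only [Fin.zero_eta, Fin.mk_one] <;> (rw [smul_apply2]; field_simp; try linarith [h])⟩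

/-- Three distinct points on a circle are not collinear (cross product form). -/
lemma circle_cross_ne (o p q s : EuclideanSpace ℝ (Fin 2)) (R : ℝ)
    (hp : ‖p - o‖ = R) (hq : ‖q - o‖ = R) (hs : ‖s - o‖ = R)
    (hpq : p ≠ q) (hps : p ≠ s) (hqs : q ≠ s) :
    (q 0 - p 0) * (s 1 - p 1) - (q 1 - p 1) * (s 0 - p 0) ≠ 0 := by
  intro hcross
  have hv : q - p ≠ 0 := sub_ne_zero_of_ne (Ne.symm hpq)
  obtain ⟨t, ht⟩ := cross_dep (q - p) (s - p) hv hcross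
  have hqo : q - o = p - o + (q - p) := by abel
  have hso : s - o = p - o + t • (q - p) := by rw [← ht]; abel
  have e1 : ‖p - o + (q - p)‖^2 = R^2 := by rw [← hqo, hq]
  have e2 : ‖p - o + t • (q - p)‖^2 = R^2 := by rw [← hso, hs]
  rw [norm_add_sq_real] at e1 e2
  rw [hp] at e1 e2
  rw [real_inner_smul_right, norm_smul, mul_pow] at e2
  have hnt : ‖t‖^2 = t^2 := by rw [Real.norm_eq_abs, sq_abs]
  rw [hnt] at e2
  have hn0 : ‖q - p‖ ≠ 0 := by simpa using hv
  have hn : (0:ℝ) < ‖q - p‖^2 := by positivity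
  have key : ‖q - p‖^2 * (t * (t - 1)) = 0 := by linear_combination e2 - t * e1
  rcases mul_eq_zero.mp key with h | h
  · linarith
  rcases mul_eq_zero.mp h with h | h
  · apply hps
    rw [h, zero_smul] at ht
    exact (eq_of_sub_eq_zero ht).symm
  · apply hqs
    have h1 : t = 1 := by linarith
    rw [h1, one_smul] at ht
    exact (sub_left_injective.eq_iff.mp ht).symm

lemma match4 (f : Fin 4 → Fin 4 → ℝ) (hsymm : ∀ i j, f i j = f j i) (V : ℝ)
    (h1 : f 0 1 + f 2 3 = V) (h2 : f 0 2 + f 1 3 = V) (h3 : f 0 3 + f 1 2 = V)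
    (a b c d : Fin 4) (hab : a ≠ b) (hac : a ≠ c) (had : a ≠ d)
    (hbc : b ≠ c) (hbd : b ≠ d) (hcd : c ≠ d) :
    f a b + f c d = V := by
  fin_cases a <;> fin_cases b <;> fin_cases c <;> fin_cases d <;>
    simp_all <;> linarith [hsymm 0 1, hsymm 0 2, hsymm 0 3, hsymm 1 2, hsymm 1 3, hsymm 2 3,
      hsymm 1 0, hsymm 2 0, hsymm 3 0, hsymm 2 1, hsymm 3 1, hsymm 3 2]

/-- helper: inverse cube chord comparison -/
lemma inv_cube_lt (R a b : ℝ) (hR : 0 < R) (ha : 0 < a) (hab : a < b) :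
    ((2*R*b)^3)⁻¹ < ((2*R*a)^3)⁻¹ := by
  have h1 : (0:ℝ) < 2*R*a := by positivity
  have h2 : 2*R*a < 2*R*b := by nlinarith
  have := pow_lt_pow_left₀ h2 (le_of_lt h1) (by norm_num : 3 ≠ 0)
  exact inv_strictAnti₀ (by positivity) this

lemma sin_lt_sin_add (x y : ℝ) (hx : 0 < x) (hy : 0 < y) (hxy : x + y ≤ π/2) :
    Real.sin x < Real.sin (x+y) := by
  apply Real.strictMonoOn_sin ⟨by linarith [Real.pi_pos], by linarith⟩
    ⟨by linarith [Real.pi_pos], hxy⟩ (by linarith)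

lemma core (R α β γ δ : ℝ) (hR : 0 < R) (ha : 0 < α) (hb : 0 < β) (hc : 0 < γ) (hd : 0 < δ)
    (hsum : α + β + γ + δ = π)
    (E1 : ((2*R*Real.sin α)^3)⁻¹ + ((2*R*Real.sin γ)^3)⁻¹
        = ((2*R*Real.sin (α+β))^3)⁻¹ + ((2*R*Real.sin (β+γ))^3)⁻¹)
    (E2 : ((2*R*Real.sin β)^3)⁻¹ + ((2*R*Real.sin δ)^3)⁻¹
        = ((2*R*Real.sin (α+β))^3)⁻¹ + ((2*R*Real.sin (β+γ))^3)⁻¹) : False := by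
  have hπ := Real.pi_pos
  have hP : Real.sin (α+β) = Real.sin (γ+δ) := by
    rw [show γ+δ = π - (α+β) by linarith, Real.sin_pi_sub]
  have hQ : Real.sin (β+γ) = Real.sin (δ+α) := by
    rw [show δ+α = π - (β+γ) by linarith, Real.sin_pi_sub]
  rcases le_or_gt (α+β) (π/2) with h1 | h1 <;> rcases le_or_gt (β+γ) (π/2) with h2 | h2
  · -- P > A, Q > C : contra E1
    have i1 := inv_cube_lt R (Real.sin α) (Real.sin (α+β)) hR
      (Real.sin_pos_of_pos_of_lt_pi ha (by linarith)) (sin_lt_sin_add α β ha hb h1)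
    have i2 := inv_cube_lt R (Real.sin γ) (Real.sin (β+γ)) hR
      (Real.sin_pos_of_pos_of_lt_pi hc (by linarith))
      (by rw [add_comm β γ] at h2 ⊢; exact sin_lt_sin_add γ β hc hb h2)
    linarith
  · -- P > B (α+β ≤ π/2), Q = sin(δ+α) > D (δ+α ≤ π/2 since β+γ > π/2): contra E2
    have hda : δ + α ≤ π/2 := by linarith
    have i1 := inv_cube_lt R (Real.sin β) (Real.sin (α+β)) hR
      (Real.sin_pos_of_pos_of_lt_pi hb (by linarith))
      (by rw [add_comm α β]; exact sin_lt_sin_add β α hb ha (by linarith))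
    have i2 := inv_cube_lt R (Real.sin δ) (Real.sin (δ+α)) hR
      (Real.sin_pos_of_pos_of_lt_pi hd (by linarith)) (sin_lt_sin_add δ α hd ha hda)
    rw [← hQ] at i2
    linarith
  · -- α+β > π/2 so γ+δ ≤ π/2 : P = sin(γ+δ) > D; Q > B : contra E2
    have hgd : γ + δ ≤ π/2 := by linarith
    have i1 := inv_cube_lt R (Real.sin δ) (Real.sin (γ+δ)) hR
      (Real.sin_pos_of_pos_of_lt_pi hd (by linarith))
      (by rw [add_comm γ δ]; exact sin_lt_sin_add δ γ hd hc (by linarith))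
    have i2 := inv_cube_lt R (Real.sin β) (Real.sin (β+γ)) hR
      (Real.sin_pos_of_pos_of_lt_pi hb (by linarith)) (sin_lt_sin_add β γ hb hc h2)
    rw [← hP] at i1
    linarith
  · -- both diagonals from far side: P = sin(γ+δ) > C, Q = sin(δ+α) > A : contra E1
    have hgd : γ + δ ≤ π/2 := by linarith
    have hda : δ + α ≤ π/2 := by linarith
    have i1 := inv_cube_lt R (Real.sin γ) (Real.sin (γ+δ)) hR
      (Real.sin_pos_of_pos_of_lt_pi hc (by linarith)) (sin_lt_sin_add γ δ hc hd hgd)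
    have i2 := inv_cube_lt R (Real.sin α) (Real.sin (δ+α)) hR
      (Real.sin_pos_of_pos_of_lt_pi ha (by linarith))
      (by rw [add_comm δ α]; exact sin_lt_sin_add α δ ha hd (by linarith))
    rw [← hP] at i1
    rw [← hQ] at i2
    linarith

lemma key (p : Fin 4 → EuclideanSpace ℝ (Fin 2)) (o : EuclideanSpace ℝ (Fin 2)) (R : ℝ)
    (hR : ∀ i, ‖p i - o‖ = R) (hinj : Function.Injective p)
    (h1 : (‖p 1 - p 0‖^3)⁻¹ + (‖p 3 - p 2‖^3)⁻¹ = (‖p 3 - p 0‖^3)⁻¹ + (‖p 2 - p 1‖^3)⁻¹)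
    (h2 : (‖p 2 - p 0‖^3)⁻¹ + (‖p 3 - p 1‖^3)⁻¹ = (‖p 3 - p 0‖^3)⁻¹ + (‖p 2 - p 1‖^3)⁻¹) :
    False := by
  have hR0 : 0 < R := by
    have hnn : (0:ℝ) ≤ R := by rw [← hR 0]; positivity
    rcases hnn.lt_or_eq with h | h
    · exact h
    · exfalso
      have h0 : p 0 - o = 0 := norm_eq_zero.mp (by rw [hR 0, ← h])
      have h1' : p 1 - o = 0 := norm_eq_zero.mp (by rw [hR 1, ← h])
      rw [sub_eq_zero] at h0 h1'
      exact (by decide : (0:Fin 4) ≠ 1) (hinj (by rw [h0, h1']))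
  set z : Fin 4 → ℂ := fun i => ⟨p i 0 - o 0, p i 1 - o 1⟩ with hz
  have habs : ∀ i, ‖z i‖ = R := by
    intro i
    have hh : ‖z i‖ = Real.sqrt ((p i 0 - o 0)^2 + (p i 1 - o 1)^2) := by
      rw [Complex.norm_def, Complex.normSq_mk]; ring_nf
    rw [hh, ← hR i, EuclideanSpace.norm_eq]
    simp [Fin.sum_univ_two, sub_apply2, sq_abs]
  set u : Fin 4 → ℝ := fun i => (z i).arg with hu
  have hcos : ∀ i, R * Real.cos (u i) = p i 0 - o 0 := by
    intro i; rw [← habs i]; exact Complex.norm_mul_cos_arg (z i)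
  have hsin : ∀ i, R * Real.sin (u i) = p i 1 - o 1 := by
    intro i; rw [← habs i]; exact Complex.norm_mul_sin_arg (z i)
  have huIoc : ∀ i, u i ∈ Set.Ioc (-π) π := fun i => Complex.arg_mem_Ioc (z i)
  have huinj : Function.Injective u := by
    intro i j h
    apply hinj
    ext k
    fin_cases k
    · show p i 0 = p j 0
      have hi := hcos i; have hj := hcos j; rw [h] at hi; linarith
    · show p i 1 = p j 1
      have hi := hsin i; have hj := hsin j; rw [h] at hi; linarith
  have hchord : ∀ i j, u j < u i → ‖p i - p j‖ = 2*R*Real.sin ((u i - u j)/2) := by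
    intro i j hij
    have hb1 : 0 < (u i - u j)/2 := by linarith
    have hb2 : (u i - u j)/2 < π := by
      have := (huIoc i).2; have := (huIoc j).1; linarith
    have hspos : 0 < Real.sin ((u i - u j)/2) := Real.sin_pos_of_pos_of_lt_pi hb1 hb2
    have h2θ : Real.cos (u i - u j) = 1 - 2 * Real.sin ((u i - u j)/2)^2 := by
      have hdm := Real.cos_two_mul ((u i - u j)/2)
      rw [show 2 * ((u i - u j)/2) = u i - u j by ring] at hdm
      have hp := Real.sin_sq_add_cos_sq ((u i - u j)/2)
      linarith
    have hsq : ‖p i - p j‖^2 = (2*R*Real.sin ((u i - u j)/2))^2 := by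
      rw [norm_sq_two, sub_apply2, sub_apply2]
      rw [show p i 0 - p j 0 = R * Real.cos (u i) - R * Real.cos (u j) by
            have := hcos i; have := hcos j; linarith,
          show p i 1 - p j 1 = R * Real.sin (u i) - R * Real.sin (u j) by
            have := hsin i; have := hsin j; linarith]
      linear_combination (R^2) * Real.sin_sq_add_cos_sq (u i)
        + (R^2) * Real.sin_sq_add_cos_sq (u j)
        + (2*R^2) * Real.cos_sub (u i) (u j)
        - (2*R^2) * h2θ
    calc ‖p i - p j‖ = √(‖p i - p j‖^2) := (Real.sqrt_sq (norm_nonneg _)).symm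
      _ = √((2*R*Real.sin ((u i - u j)/2))^2) := by rw [hsq]
      _ = 2*R*Real.sin ((u i - u j)/2) := Real.sqrt_sq (by positivity)
  -- sorting
  set σ := Tuple.sort u with hσ
  have hmono := Tuple.monotone_sort u
  set a := σ 0; set b := σ 1; set c := σ 2; set d := σ 3
  have hne : ∀ (i j : Fin 4), i ≠ j → σ i ≠ σ j := fun i j hij => fun h => hij (σ.injective h)
  have hlt : ∀ (i j : Fin 4), i < j → u (σ i) < u (σ j) := by
    intro i j hij
    exact lt_of_le_of_ne (hmono (le_of_lt hij)) (fun h => hne i j (ne_of_lt hij) (huinj h))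
  have hab : u a < u b := hlt 0 1 (by decide)
  have hbc : u b < u c := hlt 1 2 (by decide)
  have hcd : u c < u d := hlt 2 3 (by decide)
  -- angles
  set α := (u b - u a)/2 with hα
  set β := (u c - u b)/2 with hβ
  set γ := (u d - u c)/2 with hγ
  set δ := π - α - β - γ with hδ
  have hπ := Real.pi_pos
  have hαp : 0 < α := by simp [hα]; linarith
  have hβp : 0 < β := by simp [hβ]; linarith
  have hγp : 0 < γ := by simp [hγ]; linarith
  have hδp : 0 < δ := by
    have h1 := (huIoc d).2; have h2 := (huIoc a).1
    simp [hδ, hα, hβ, hγ]; linarith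
  -- chords
  have cab : ‖p b - p a‖ = 2*R*Real.sin α := hchord b a hab
  have cbc : ‖p c - p b‖ = 2*R*Real.sin β := hchord c b hbc
  have ccd : ‖p d - p c‖ = 2*R*Real.sin γ := hchord d c hcd
  have cac : ‖p c - p a‖ = 2*R*Real.sin (α+β) := by
    rw [hchord c a (by linarith)]; congr 1; rw [hα, hβ]; ring
  have cbd : ‖p d - p b‖ = 2*R*Real.sin (β+γ) := by
    rw [hchord d b (by linarith)]; congr 1; rw [hβ, hγ]; ring
  have cad : ‖p d - p a‖ = 2*R*Real.sin δ := by
    rw [hchord d a (by linarith)]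
    rw [show (u d - u a)/2 = α + β + γ by rw [hα, hβ, hγ]; ring]
    rw [show α + β + γ = π - δ by rw [hδ]; ring, Real.sin_pi_sub]
  -- symmetric distance function
  set s : Fin 4 → Fin 4 → ℝ := fun i j => (‖p j - p i‖^3)⁻¹ with hs
  have hsymm : ∀ i j, s i j = s j i := by intro i j; simp [hs, norm_sub_rev]
  set V : ℝ := s 0 3 + s 1 2 with hV
  have e1 : s 0 1 + s 2 3 = V := h1
  have e2 : s 0 2 + s 1 3 = V := h2
  have e3 : s 0 3 + s 1 2 = V := rfl
  have G1 : s a b + s c d = V := match4 s hsymm V e1 e2 e3 a b c d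
    (hne 0 1 (by decide)) (hne 0 2 (by decide)) (hne 0 3 (by decide))
    (hne 1 2 (by decide)) (hne 1 3 (by decide)) (hne 2 3 (by decide))
  have G2 : s a c + s b d = V := match4 s hsymm V e1 e2 e3 a c b d
    (hne 0 2 (by decide)) (hne 0 1 (by decide)) (hne 0 3 (by decide))
    (hne 2 1 (by decide)) (hne 2 3 (by decide)) (hne 1 3 (by decide))
  have G3 : s a d + s b c = V := match4 s hsymm V e1 e2 e3 a d b c
    (hne 0 3 (by decide)) (hne 0 1 (by decide)) (hne 0 2 (by decide))
    (hne 3 1 (by decide)) (hne 3 2 (by decide)) (hne 1 2 (by decide))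
  -- convert to trig form
  have vab : s a b = ((2*R*Real.sin α)^3)⁻¹ := by rw [hs]; simp only []; rw [cab]
  have vbc : s b c = ((2*R*Real.sin β)^3)⁻¹ := by rw [hs]; simp only []; rw [cbc]
  have vcd : s c d = ((2*R*Real.sin γ)^3)⁻¹ := by rw [hs]; simp only []; rw [ccd]
  have vac : s a c = ((2*R*Real.sin (α+β))^3)⁻¹ := by rw [hs]; simp only []; rw [cac]
  have vbd : s b d = ((2*R*Real.sin (β+γ))^3)⁻¹ := by rw [hs]; simp only []; rw [cbd]
  have vad : s a d = ((2*R*Real.sin δ)^3)⁻¹ := by rw [hs]; simp only []; rw [cad]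
  apply core R α β γ δ hR0 hαp hβp hγp hδp (by rw [hδ]; ring)
  · rw [← vab, ← vcd, ← vac, ← vbd, G1, G2]
  · rw [← vbc, ← vad, ← vac, ← vbd, G2, add_comm]
    exact G3

lemma concyclic (r : Fin 4 → EuclideanSpace ℝ (Fin 2))
    (hncol : ¬ Collinear ℝ (Set.range r)) (m : Fin 4 → ℝ)
    (hm : ∀ i, m i ≠ 0)
    (hM : ∑ i, m i = 0) (hL0 : ∑ i, m i * r i 0 = 0) (hL1 : ∑ i, m i * r i 1 = 0)
    (hI : ∑ i, m i * ‖r i‖^2 = 0) : ∃ o R, ∀ i, ‖r i - o‖ = R := by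
  classical
  rw [Fin.sum_univ_four] at hM hL0 hL1 hI
  set A : Matrix (Fin 4) (Fin 4) ℝ :=
    Matrix.of (fun i j => ![(1:ℝ), r i 0, r i 1, ‖r i‖^2] j) with hA
  have hvm : Matrix.vecMul m A = 0 := by
    funext j
    fin_cases j <;>
      simp [hA, Matrix.vecMul, dotProduct, Fin.sum_univ_four] <;> linarith
  have hdet : A.det = 0 := by
    rw [← Matrix.exists_vecMul_eq_zero_iff]
    exact ⟨m, fun h => hm 0 (congrFun h 0), hvm⟩
  obtain ⟨v, hv0, hvv⟩ := Matrix.exists_mulVec_eq_zero_iff.mpr hdet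
  have hrow : ∀ i, v 0 + v 1 * r i 0 + v 2 * r i 1 + v 3 * ‖r i‖^2 = 0 := by
    intro i
    have := congrFun hvv i
    simpa [hA, Matrix.mulVec, dotProduct, Fin.sum_univ_four, mul_comm] using this
  by_cases hv3 : v 3 = 0
  · -- collinear: contradiction
    exfalso
    apply hncol
    have hlin : ∀ i, v 0 + v 1 * r i 0 + v 2 * r i 1 = 0 := by
      intro i; have := hrow i; rw [hv3] at this; linarith
    have hv12 : v 1 ≠ 0 ∨ v 2 ≠ 0 := by
      by_contra hc
      push_neg at hc
      apply hv0
      have h0 : v 0 = 0 := by have := hlin 0; rw [hc.1, hc.2] at this; linarith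
      funext j
      fin_cases j <;> simp [h0, hc.1, hc.2, hv3]
    rw [collinear_iff_of_mem (Set.mem_range_self 0)]
    refine ⟨vec2 (v 2) (-(v 1)), ?_⟩
    rintro p ⟨i, rfl⟩
    have hi := hlin i
    have h0 := hlin 0
    rcases hv12 with h | h
    · refine ⟨-(r i 1 - r 0 1)/(v 1), ?_⟩
      have hx : r i 0 = -(r i 1 - r 0 1)/(v 1) * (vec2 (v 2) (-(v 1)) 0) + r 0 0 := by
        rw [vec2_apply0]; field_simp; linarith [hi, h0]
      have hy : r i 1 = -(r i 1 - r 0 1)/(v 1) * (vec2 (v 2) (-(v 1)) 1) + r 0 1 := by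
        rw [vec2_apply1]; field_simp; try ring
      ext k
      fin_cases k
      · exact hx
      · exact hy
    · refine ⟨(r i 0 - r 0 0)/(v 2), ?_⟩
      have hx : r i 0 = (r i 0 - r 0 0)/(v 2) * (vec2 (v 2) (-(v 1)) 0) + r 0 0 := by
        rw [vec2_apply0]; field_simp; try ring
      have hy : r i 1 = (r i 0 - r 0 0)/(v 2) * (vec2 (v 2) (-(v 1)) 1) + r 0 1 := by
        rw [vec2_apply1]; field_simp; linarith [hi, h0]
      ext k
      fin_cases k
      · exact hx
      · exact hy
  · -- circle
    obtain ⟨w, hw⟩ : ∃ w, 2 * v 3 * w = 1 := ⟨1/(2*v 3), by field_simp⟩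
    set o : EuclideanSpace ℝ (Fin 2) := vec2 (-(v 1) * w) (-(v 2) * w) with ho
    refine ⟨o, ‖r 0 - o‖, ?_⟩
    intro i
    have hsq : ‖r i - o‖^2 = ‖r 0 - o‖^2 := by
      rw [norm_sq_two, norm_sq_two, sub_apply2, sub_apply2, sub_apply2, sub_apply2]
      have hi := hrow i; rw [norm_sq_two (r i)] at hi
      have h0 := hrow 0; rw [norm_sq_two (r 0)] at h0
      rw [ho, vec2_apply0, vec2_apply1]
      linear_combination (2*w)*hi - (2*w)*h0 +
        (-(r i 0^2 + r i 1^2 - r 0 0^2 - r 0 1^2)) * hw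
    calc ‖r i - o‖ = √(‖r i - o‖^2) := (Real.sqrt_sq (norm_nonneg _)).symm
      _ = √(‖r 0 - o‖^2) := by rw [hsq]
      _ = ‖r 0 - o‖ := Real.sqrt_sq (norm_nonneg _)


end Helpers

/-- There is no planar non-collinear four-body central configuration with vanishing
total mass, vanishing vector of inertia, and vanishing moment of inertia. -/
theorem no_central_config_vanishing_mass_inertia_moment :
    ¬ ∃ (r : Fin 4 → EuclideanSpace ℝ (Fin 2)) (m : Fin 4 → ℝ) (ξ : ℝ),
        Function.Injective r ∧
        ¬ Collinear ℝ (Set.range r) ∧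
        (∀ i, m i ≠ 0) ∧
        ∑ i, m i = 0 ∧
        ∑ i, m i • r i = 0 ∧
        ∑ i, m i * ‖r i‖ ^ 2 = 0 ∧
        IsCentral m r ξ := by
  rintro ⟨r, m, ξ, hinj, hncol, hm, hM, hLam, hI, hC⟩
  -- coordinate components of the linear constraints
  have hL0 : ∑ i, m i * r i 0 = 0 := by
    have h : (∑ i, m i • r i) 0 = (0 : EuclideanSpace ℝ (Fin 2)) 0 := by rw [hLam]
    rw [sum_apply2] at h
    simpa [smul_apply2] using h
  have hL1 : ∑ i, m i * r i 1 = 0 := by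
    have h : (∑ i, m i • r i) 1 = (0 : EuclideanSpace ℝ (Fin 2)) 1 := by rw [hLam]
    rw [sum_apply2] at h
    simpa [smul_apply2] using h
  -- concyclicity
  obtain ⟨o, R, hR⟩ := concyclic r hncol m hm hM hL0 hL1 hI
  -- accel expansion
  have hACC : ∀ i k, accel m r i k = ∑ j : Fin 4, m j * (‖r j - r i‖^3)⁻¹ * (r j k - r i k) := by
    intro i k
    show (∑ j ∈ Finset.univ.erase i, (m j / ‖r j - r i‖ ^ 3) • (r j - r i)) k = _
    rw [sum_apply2]
    have e1 : ∀ j, ((m j / ‖r j - r i‖ ^ 3) • (r j - r i)) k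
        = m j * (‖r j - r i‖^3)⁻¹ * (r j k - r i k) := by
      intro j; rw [smul_apply2, sub_apply2, div_eq_mul_inv]
    simp only [e1]
    rw [Finset.sum_erase_eq_sub (Finset.mem_univ i)]
    simp
  -- distinctness
  have hne01 : r 0 ≠ r 1 := fun h => (by decide : (0:Fin 4) ≠ 1) (hinj h)
  have hne02 : r 0 ≠ r 2 := fun h => (by decide : (0:Fin 4) ≠ 2) (hinj h)
  have hne03 : r 0 ≠ r 3 := fun h => (by decide : (0:Fin 4) ≠ 3) (hinj h)
  have hne12 : r 1 ≠ r 2 := fun h => (by decide : (1:Fin 4) ≠ 2) (hinj h)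
  have hne13 : r 1 ≠ r 3 := fun h => (by decide : (1:Fin 4) ≠ 3) (hinj h)
  have hne23 : r 2 ≠ r 3 := fun h => (by decide : (2:Fin 4) ≠ 3) (hinj h)
  -- expanded sums
  rw [Fin.sum_univ_four] at hM hL0 hL1
  -- pair (0,1)
  have h01 := hC 0 1
  have hx01 : accel m r 1 0 - accel m r 0 0 = ξ * (r 1 0 - r 0 0) := by
    have h := congrArg (fun f : EuclideanSpace ℝ (Fin 2) => f 0) h01
    simpa [sub_apply2, smul_apply2] using h
  have hy01 : accel m r 1 1 - accel m r 0 1 = ξ * (r 1 1 - r 0 1) := by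
    have h := congrArg (fun f : EuclideanSpace ℝ (Fin 2) => f 1) h01
    simpa [sub_apply2, smul_apply2] using h
  rw [hACC 1 0, hACC 0 0, Fin.sum_univ_four, Fin.sum_univ_four] at hx01
  rw [hACC 1 1, hACC 0 1, Fin.sum_univ_four, Fin.sum_univ_four] at hy01
  have hW : m 2 * ((r 1 0 - r 0 0) * (r 2 1 - r 0 1) - (r 1 1 - r 0 1) * (r 2 0 - r 0 0))
        * ((‖r 2 - r 0‖^3)⁻¹ - (‖r 2 - r 1‖^3)⁻¹)
      + m 3 * ((r 1 0 - r 0 0) * (r 3 1 - r 0 1) - (r 1 1 - r 0 1) * (r 3 0 - r 0 0))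
        * ((‖r 3 - r 0‖^3)⁻¹ - (‖r 3 - r 1‖^3)⁻¹) = 0 := by
    linear_combination (r 1 1 - r 0 1) * hx01 - (r 1 0 - r 0 0) * hy01
  have hMass : m 2 * ((r 1 0 - r 0 0) * (r 2 1 - r 0 1) - (r 1 1 - r 0 1) * (r 2 0 - r 0 0))
      + m 3 * ((r 1 0 - r 0 0) * (r 3 1 - r 0 1) - (r 1 1 - r 0 1) * (r 3 0 - r 0 0)) = 0 := by
    linear_combination (r 1 0 - r 0 0) * hL1 - (r 1 1 - r 0 1) * hL0
      + ((r 1 1 - r 0 1) * r 0 0 - (r 1 0 - r 0 0) * r 0 1) * hM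
  have hD012 : (r 1 0 - r 0 0) * (r 2 1 - r 0 1) - (r 1 1 - r 0 1) * (r 2 0 - r 0 0) ≠ 0 :=
    circle_cross_ne o (r 0) (r 1) (r 2) R (hR 0) (hR 1) (hR 2) hne01 hne02 hne12
  have hEa : (‖r 2 - r 0‖^3)⁻¹ + (‖r 3 - r 1‖^3)⁻¹
      = (‖r 3 - r 0‖^3)⁻¹ + (‖r 2 - r 1‖^3)⁻¹ := by
    have hker : (m 2 * ((r 1 0 - r 0 0) * (r 2 1 - r 0 1) - (r 1 1 - r 0 1) * (r 2 0 - r 0 0)))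
        * (((‖r 2 - r 0‖^3)⁻¹ - (‖r 2 - r 1‖^3)⁻¹)
           - ((‖r 3 - r 0‖^3)⁻¹ - (‖r 3 - r 1‖^3)⁻¹)) = 0 := by
      linear_combination hW - ((‖r 3 - r 0‖^3)⁻¹ - (‖r 3 - r 1‖^3)⁻¹) * hMass
    rcases mul_eq_zero.mp hker with h | h
    · exact absurd h (mul_ne_zero (hm 2) hD012)
    · linarith
  -- pair (0,2)
  have h02 := hC 0 2
  have hx02 : accel m r 2 0 - accel m r 0 0 = ξ * (r 2 0 - r 0 0) := by
    have h := congrArg (fun f : EuclideanSpace ℝ (Fin 2) => f 0) h02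
    simpa [sub_apply2, smul_apply2] using h
  have hy02 : accel m r 2 1 - accel m r 0 1 = ξ * (r 2 1 - r 0 1) := by
    have h := congrArg (fun f : EuclideanSpace ℝ (Fin 2) => f 1) h02
    simpa [sub_apply2, smul_apply2] using h
  rw [hACC 2 0, hACC 0 0, Fin.sum_univ_four, Fin.sum_univ_four] at hx02
  rw [hACC 2 1, hACC 0 1, Fin.sum_univ_four, Fin.sum_univ_four] at hy02
  have hswap : (‖r 1 - r 2‖^3)⁻¹ = (‖r 2 - r 1‖^3)⁻¹ := by rw [norm_sub_rev]
  rw [hswap] at hx02 hy02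
  have hW2 : m 1 * ((r 2 0 - r 0 0) * (r 1 1 - r 0 1) - (r 2 1 - r 0 1) * (r 1 0 - r 0 0))
        * ((‖r 1 - r 0‖^3)⁻¹ - (‖r 2 - r 1‖^3)⁻¹)
      + m 3 * ((r 2 0 - r 0 0) * (r 3 1 - r 0 1) - (r 2 1 - r 0 1) * (r 3 0 - r 0 0))
        * ((‖r 3 - r 0‖^3)⁻¹ - (‖r 3 - r 2‖^3)⁻¹) = 0 := by
    linear_combination (r 2 1 - r 0 1) * hx02 - (r 2 0 - r 0 0) * hy02
  have hMass2 : m 1 * ((r 2 0 - r 0 0) * (r 1 1 - r 0 1) - (r 2 1 - r 0 1) * (r 1 0 - r 0 0))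
      + m 3 * ((r 2 0 - r 0 0) * (r 3 1 - r 0 1) - (r 2 1 - r 0 1) * (r 3 0 - r 0 0)) = 0 := by
    linear_combination (r 2 0 - r 0 0) * hL1 - (r 2 1 - r 0 1) * hL0
      + ((r 2 1 - r 0 1) * r 0 0 - (r 2 0 - r 0 0) * r 0 1) * hM
  have hD021 : (r 2 0 - r 0 0) * (r 1 1 - r 0 1) - (r 2 1 - r 0 1) * (r 1 0 - r 0 0) ≠ 0 :=
    circle_cross_ne o (r 0) (r 2) (r 1) R (hR 0) (hR 2) (hR 1) hne02 hne01 (Ne.symm hne12)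
  have hEb : (‖r 1 - r 0‖^3)⁻¹ + (‖r 3 - r 2‖^3)⁻¹
      = (‖r 3 - r 0‖^3)⁻¹ + (‖r 2 - r 1‖^3)⁻¹ := by
    have hker : (m 1 * ((r 2 0 - r 0 0) * (r 1 1 - r 0 1) - (r 2 1 - r 0 1) * (r 1 0 - r 0 0)))
        * (((‖r 1 - r 0‖^3)⁻¹ - (‖r 2 - r 1‖^3)⁻¹)
           - ((‖r 3 - r 0‖^3)⁻¹ - (‖r 3 - r 2‖^3)⁻¹)) = 0 := by
      linear_combination hW2 - ((‖r 3 - r 0‖^3)⁻¹ - (‖r 3 - r 2‖^3)⁻¹) * hMass2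
    rcases mul_eq_zero.mp hker with h | h
    · exact absurd h (mul_ne_zero (hm 1) hD021)
    · linarith
  exact key r o R hR hinj hEb hEa
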